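/- If two distinct superbubbles share a vertex, then either one's exit is the other's entrance or one is included in the other's interior: if (s₁, t₁) and (s₂, t₂) are entrance/exit pairs with (s₁,t₁) ≠ (s₂,t₂) and U(s₁,t₁) ∩ U(s₂,t₂) ≠ ∅, then t₁ = s₂, or t₂ = s₁, or U(s₁,t₁) ⊆ U(s₂,t₂) \ {s₂, t₂}, or U(s₂,t₂) ⊆ U(s₁,t₁) \ {s₁, t₁}. -/

import Mathlib

/-- The vertex set of the (potential) superbubble with entrance `s` and exit `t`:
vertices reachable from `s` without leaving through `t`. -/
def bubbleSet {V : Type*} (Adj : V → V → Prop) (s t : V) : Set V :=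
  {v | Relation.ReflTransGen (fun u w => Adj u w ∧ u ≠ t) s v}

/-- The pair `(s,t)` satisfies the reachability, matching and acyclicity conditions. -/
def SBCore {V : Type*} (Adj : V → V → Prop) (s t : V) : Prop :=
  s ≠ t ∧
  -- reachability: `t` is reachable from `s`
  Relation.ReflTransGen Adj s t ∧
  -- matching: vertices reachable from `s` without passing through `t` are exactly
  -- the vertices from which `t` is reachable without passing through `s`
  bubbleSet Adj s t = {v | Relation.ReflTransGen (fun u w => Adj u w ∧ w ≠ s) v t} ∧
  -- acyclicity: the subgraph induced by `bubbleSet Adj s t` is acyclic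
  ¬ ∃ v ∈ bubbleSet Adj s t,
      Relation.TransGen
        (fun u w => Adj u w ∧ u ∈ bubbleSet Adj s t ∧ w ∈ bubbleSet Adj s t) v v

/-- `(s,t)` is the entrance/exit pair of a superbubble: it satisfies reachability,
matching, acyclicity and minimality. -/
def IsEntranceExit {V : Type*} (Adj : V → V → Prop) (s t : V) : Prop :=
  SBCore Adj s t ∧
  -- minimality
  ¬ ∃ t' ∈ bubbleSet Adj s t, t' ≠ t ∧ t' ≠ s ∧ SBCore Adj s t'

namespace SBaux

open Relation

variable {V : Type*} {Adj : V → V → Prop} {s t s₁ t₁ s₂ t₂ u v w x y : V}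

theorem mem_bubbleSet :
    v ∈ bubbleSet Adj s t ↔ ReflTransGen (fun u w => Adj u w ∧ u ≠ t) s v := Iff.rfl

theorem mem_iff_to (h : SBCore Adj s t) :
    v ∈ bubbleSet Adj s t ↔ ReflTransGen (fun u w => Adj u w ∧ w ≠ s) v t := by
  rw [h.2.2.1]; exact Iff.rfl

theorem s_mem : s ∈ bubbleSet Adj s t := ReflTransGen.refl

theorem t_mem (h : SBCore Adj s t) : t ∈ bubbleSet Adj s t :=
  (mem_iff_to h).mpr ReflTransGen.refl

theorem fwd (hu : u ∈ bubbleSet Adj s t) (hne : u ≠ t) (ha : Adj u w) :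
    w ∈ bubbleSet Adj s t :=
  ReflTransGen.tail hu ⟨ha, hne⟩

theorem bwd (h : SBCore Adj s t) (hw : w ∈ bubbleSet Adj s t) (hne : w ≠ s)
    (ha : Adj u w) : u ∈ bubbleSet Adj s t :=
  (mem_iff_to h).mpr (ReflTransGen.head ⟨ha, hne⟩ ((mem_iff_to h).mp hw))

theorem memFrom (hp : ReflTransGen (fun u w => Adj u w ∧ u ≠ t) x y)
    (hx : x ∈ bubbleSet Adj s t) : y ∈ bubbleSet Adj s t := by
  induction hp with
  | refl => exact hx
  | tail _ e ih => exact fwd ih e.2 e.1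

theorem memTo (h : SBCore Adj s t) (hp : ReflTransGen (fun u w => Adj u w ∧ w ≠ s) x y)
    (hy : y ∈ bubbleSet Adj s t) : x ∈ bubbleSet Adj s t := by
  induction hp using ReflTransGen.head_induction_on with
  | refl => exact hy
  | head e _ ih => exact bwd h ih e.2 e.1

theorem strengthenFrom (hp : ReflTransGen (fun u w => Adj u w ∧ u ≠ t) x y)
    (hx : x ∈ bubbleSet Adj s t) :
    ReflTransGen (fun u w => Adj u w ∧ u ≠ t ∧ u ∈ bubbleSet Adj s t ∧ w ∈ bubbleSet Adj s t) x y := by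
  induction hp with
  | refl => exact ReflTransGen.refl
  | tail hab e ih =>
      have hb := memFrom hab hx
      exact ih.tail ⟨e.1, e.2, hb, fwd hb e.2 e.1⟩

theorem strengthenTo (h : SBCore Adj s t)
    (hp : ReflTransGen (fun u w => Adj u w ∧ w ≠ s) x y)
    (hy : y ∈ bubbleSet Adj s t) :
    ReflTransGen (fun u w => Adj u w ∧ w ≠ s ∧ u ∈ bubbleSet Adj s t ∧ w ∈ bubbleSet Adj s t) x y := by
  induction hp using ReflTransGen.head_induction_on with
  | refl => exact ReflTransGen.refl
  | head e hp' ih =>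
      have hb := memTo h hp' hy
      exact ReflTransGen.head ⟨e.1, e.2, bwd h hb e.2 e.1, hb⟩ ih

theorem pathFrom (h : SBCore Adj s t) (hv : v ∈ bubbleSet Adj s t) :
    ReflTransGen (fun u w => Adj u w ∧ u ≠ t ∧ u ∈ bubbleSet Adj s t ∧ w ∈ bubbleSet Adj s t) s v :=
  strengthenFrom hv s_mem

theorem pathTo (h : SBCore Adj s t) (hv : v ∈ bubbleSet Adj s t) :
    ReflTransGen (fun u w => Adj u w ∧ w ≠ s ∧ u ∈ bubbleSet Adj s t ∧ w ∈ bubbleSet Adj s t) v t :=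
  strengthenTo h ((mem_iff_to h).mp hv) (t_mem h)

theorem acyc (h : SBCore Adj s t) (hv : v ∈ bubbleSet Adj s t)
    (hc : TransGen (fun u w => Adj u w ∧ u ∈ bubbleSet Adj s t ∧ w ∈ bubbleSet Adj s t) v v) :
    False := h.2.2.2 ⟨v, hv, hc⟩

theorem no_into_s (h : SBCore Adj s t) (hu : u ∈ bubbleSet Adj s t) (ha : Adj u s) :
    False :=
  acyc h s_mem (TransGen.tail'
    (ReflTransGen.mono (fun a b hab => ⟨hab.1, hab.2.2.1, hab.2.2.2⟩) _ _ (pathFrom h hu))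
    ⟨ha, hu, s_mem⟩)

theorem no_out_t (h : SBCore Adj s t) (hw : w ∈ bubbleSet Adj s t) (ha : Adj t w) :
    False :=
  acyc h (t_mem h) (TransGen.head' ⟨ha, t_mem h, hw⟩
    (ReflTransGen.mono (fun a b hab => ⟨hab.1, hab.2.2.1, hab.2.2.2⟩) _ _ (pathTo h hw)))



theorem exit_or (h₁ : SBCore Adj s₁ t₁) (h₂ : SBCore Adj s₂ t₂)
    (hv1 : v ∈ bubbleSet Adj s₁ t₁) (hv2 : v ∈ bubbleSet Adj s₂ t₂) :
    t₁ ∈ bubbleSet Adj s₂ t₂ ∨ t₂ ∈ bubbleSet Adj s₁ t₁ := by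
  have aux : ∀ x, Relation.ReflTransGen (fun u w => Adj u w ∧ w ≠ s₁ ∧
      u ∈ bubbleSet Adj s₁ t₁ ∧ w ∈ bubbleSet Adj s₁ t₁) x t₁ →
      x ∈ bubbleSet Adj s₂ t₂ →
      t₁ ∈ bubbleSet Adj s₂ t₂ ∨ t₂ ∈ bubbleSet Adj s₁ t₁ := by
    intro x hp
    induction hp using ReflTransGen.head_induction_on with
    | refl => exact fun hx => Or.inl hx
    | @head a c e hp' ih =>
        intro hx
        by_cases hxt : a = t₂
        · exact Or.inr (hxt ▸ e.2.2.1)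
        · exact ih (fwd hx hxt e.1)
  exact aux v (pathTo h₁ hv1) hv2

theorem ent_or (h₁ : SBCore Adj s₁ t₁) (h₂ : SBCore Adj s₂ t₂)
    (hv1 : v ∈ bubbleSet Adj s₁ t₁) (hv2 : v ∈ bubbleSet Adj s₂ t₂) :
    s₁ ∈ bubbleSet Adj s₂ t₂ ∨ s₂ ∈ bubbleSet Adj s₁ t₁ := by
  have hp := pathFrom h₁ hv1
  clear hv1
  induction hp with
  | refl => exact Or.inl hv2
  | @tail b c hab e ih =>
      by_cases hcs : c = s₂
      · exact Or.inr (hcs ▸ e.2.2.2)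
      · exact ih (bwd h₂ hv2 hcs e.1)

theorem nest (h₁ : SBCore Adj s₁ t₁) (h₂ : SBCore Adj s₂ t₂)
    (hs2 : s₂ ∈ bubbleSet Adj s₁ t₁)
    (hT : t₁ ∈ bubbleSet Adj s₂ t₂ → t₁ = t₂) :
    ∀ w ∈ bubbleSet Adj s₂ t₂, w ∈ bubbleSet Adj s₁ t₁ := by
  intro w hw
  have hp := pathFrom h₂ hw
  clear hw
  induction hp with
  | refl => exact hs2
  | @tail b c hab e ih =>
      refine fwd ih (fun hb => ?_) e.1
      subst hb
      exact e.2.1 (hT e.2.2.1)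

theorem core_of (h₁ : SBCore Adj s₁ t₁) (h₂ : SBCore Adj s₂ t₂)
    (hs1 : s₁ ∈ bubbleSet Adj s₂ t₂) (ht2 : t₂ ∈ bubbleSet Adj s₁ t₁)
    (hne : s₁ ≠ t₂) : SBCore Adj s₁ t₂ := by
  have hB : ∀ x, x ∈ bubbleSet Adj s₁ t₂ → x ∈ bubbleSet Adj s₂ t₂ := by
    intro x hx
    exact memFrom hx hs1
  refine ⟨hne, ReflTransGen.mono (fun a b hab => hab.1) _ _ (pathTo h₂ hs1), ?_, ?_⟩
  · ext v
    constructor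
    · intro hv
      have hsv : Relation.ReflTransGen (fun u w => Adj u w ∧
          u ∈ bubbleSet Adj s₂ t₂ ∧ w ∈ bubbleSet Adj s₂ t₂) s₁ v :=
        ReflTransGen.mono (fun a b hab => ⟨hab.1, hab.2.2.1, hab.2.2.2⟩) _ _ (strengthenFrom hv hs1)
      have hv2 : v ∈ bubbleSet Adj s₂ t₂ := hB v hv
      have hvt := pathTo h₂ hv2
      show Relation.ReflTransGen (fun u w => Adj u w ∧ w ≠ s₁) v t₂
      clear hv hv2
      induction hvt using ReflTransGen.head_induction_on with
      | refl => exact ReflTransGen.refl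
      | @head a c e hp' ih =>
          by_cases hcs : c = s₁
          · subst hcs
            exact absurd (TransGen.tail' hsv ⟨e.1, e.2.2.1, hs1⟩) (fun hc => acyc h₂ hs1 hc)
          · exact ReflTransGen.head ⟨e.1, hcs⟩
              (ih (hsv.tail ⟨e.1, e.2.2.1, e.2.2.2⟩))
    · intro hv
      simp only [Set.mem_setOf_eq] at hv
      have hv1 : v ∈ bubbleSet Adj s₁ t₁ := memTo h₁ hv ht2
      have hsT := strengthenTo h₁ hv ht2
      have hf := pathFrom h₁ hv1
      show Relation.ReflTransGen (fun u w => Adj u w ∧ u ≠ t₂) s₁ v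
      clear hv hv1
      induction hf with
      | refl => exact ReflTransGen.refl
      | @tail b c hab e ih =>
          have hcs : c ≠ s₁ := fun hc => no_into_s h₁ e.2.2.1 (hc ▸ e.1)
          have hb := ReflTransGen.head ⟨e.1, hcs, e.2.2.1, e.2.2.2⟩ hsT
          by_cases hbt : b = t₂
          · subst hbt
            exact absurd (TransGen.head' ⟨e.1, e.2.2.1, e.2.2.2⟩
              (ReflTransGen.mono (fun a b hab => ⟨hab.1, hab.2.2.1, hab.2.2.2⟩) _ _ hsT))
              (fun hc => acyc h₁ e.2.2.1 hc)
          · exact (ih hb).tail ⟨e.1, hbt⟩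
  · rintro ⟨v, hv, hc⟩
    exact acyc h₂ (hB v hv)
      (TransGen.mono (fun a b hab => ⟨hab.1, hB a hab.2.1, hB b hab.2.2⟩) _ _ hc)

theorem core_sameexit (h₁ : SBCore Adj s₁ t) (h₂ : SBCore Adj s₂ t)
    (hs1 : s₁ ∉ bubbleSet Adj s₂ t) (hs2 : s₂ ∈ bubbleSet Adj s₁ t)
    (hne : s₁ ≠ s₂) (hst : s₂ ≠ t) : SBCore Adj s₁ s₂ := by
  -- P1 : every vertex of bubbleSet s₁ s₂ is in U₁ and not in U₂
  have hP1 : ∀ x, x ∈ bubbleSet Adj s₁ s₂ →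
      x ∈ bubbleSet Adj s₁ t ∧ (x ∈ bubbleSet Adj s₂ t → x = s₂) := by
    intro x hx
    rw [mem_bubbleSet] at hx
    induction hx with
    | refl => exact ⟨s_mem, fun hc => absurd hc hs1⟩
    | @tail b c hab e ih =>
        have hbn2 : b ∉ bubbleSet Adj s₂ t := fun hb => e.2 (ih.2 hb)
        have hbt : b ≠ t := fun hb => hbn2 (by rw [hb]; exact t_mem h₂)
        refine ⟨fwd ih.1 hbt e.1, fun hc => ?_⟩
        by_contra hcs
        exact hbn2 (bwd h₂ hc hcs e.1)
  refine ⟨hne, ReflTransGen.mono (fun a b hab => hab.1) _ _ (pathFrom h₁ hs2), ?_, ?_⟩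
  · ext v
    constructor
    · intro hv
      obtain ⟨hv1, hv2⟩ := hP1 v hv
      show Relation.ReflTransGen (fun u w => Adj u w ∧ w ≠ s₁) v s₂
      by_cases hvs : v = s₂
      · exact hvs ▸ ReflTransGen.refl
      · have hvn2 : v ∉ bubbleSet Adj s₂ t := fun hc => hvs (hv2 hc)
        have hp := pathTo h₁ hv1
        clear hv hv1 hv2 hvs
        induction hp using ReflTransGen.head_induction_on with
        | refl => exact absurd (t_mem h₂) hvn2
        | @head a c e hp' ih =>
            by_cases hcs : c = s₂
            · exact ReflTransGen.single ⟨e.1, hcs ▸ e.2.1⟩ |>.trans (hcs ▸ ReflTransGen.refl)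
            · have hcn2 : c ∉ bubbleSet Adj s₂ t := fun hc =>
                hvn2 (bwd h₂ hc hcs e.1)
              exact ReflTransGen.head ⟨e.1, e.2.1⟩ (ih hcn2)
    · intro hv
      simp only [Set.mem_setOf_eq] at hv
      have hv1 : v ∈ bubbleSet Adj s₁ t := memTo h₁ hv hs2
      have hsT := strengthenTo h₁ hv hs2
      have hf := pathFrom h₁ hv1
      show Relation.ReflTransGen (fun u w => Adj u w ∧ u ≠ s₂) s₁ v
      clear hv hv1
      induction hf with
      | refl => exact ReflTransGen.refl
      | @tail b c hab e ih =>
          have hcs : c ≠ s₁ := fun hc => no_into_s h₁ e.2.2.1 (hc ▸ e.1)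
          have hb := ReflTransGen.head ⟨e.1, hcs, e.2.2.1, e.2.2.2⟩ hsT
          by_cases hbs : b = s₂
          · subst hbs
            exact absurd (TransGen.head' ⟨e.1, e.2.2.1, e.2.2.2⟩
              (ReflTransGen.mono (fun a b hab => ⟨hab.1, hab.2.2.1, hab.2.2.2⟩) _ _ hsT))
              (fun hc => acyc h₁ e.2.2.1 hc)
          · exact (ih hb).tail ⟨e.1, hbs⟩
  · rintro ⟨v, hv, hc⟩
    exact acyc h₁ (hP1 v hv).1
      (TransGen.mono (fun a b hab => ⟨hab.1, (hP1 a hab.2.1).1, (hP1 b hab.2.2).1⟩) _ _ hc)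

theorem main_aux (h₁ : IsEntranceExit Adj s₁ t₁) (h₂ : IsEntranceExit Adj s₂ t₂)
    (hne' : ¬(s₁ = s₂ ∧ t₁ = t₂)) (h12 : t₁ ≠ s₂) (h21 : t₂ ≠ s₁)
    (hv1 : v ∈ bubbleSet Adj s₁ t₁) (hv2 : v ∈ bubbleSet Adj s₂ t₂)
    (ht : t₂ ∈ bubbleSet Adj s₁ t₁) :
    bubbleSet Adj s₂ t₂ ⊆ bubbleSet Adj s₁ t₁ \ {s₁, t₁} := by
  obtain ⟨c₁, m₁⟩ := h₁
  obtain ⟨c₂, m₂⟩ := h₂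
  by_cases htt : t₂ = t₁
  · exfalso
    subst htt
    have hss : s₁ ≠ s₂ := fun h => hne' ⟨h, rfl⟩
    rcases ent_or c₁ c₂ hv1 hv2 with hs1 | hs2
    · -- s₁ ∈ U₂ : mirror same-exit argument
      have hsub : ∀ w ∈ bubbleSet Adj s₁ t₂, w ∈ bubbleSet Adj s₂ t₂ :=
        nest c₂ c₁ hs1 (fun _ => rfl)
      have hs2' : s₂ ∉ bubbleSet Adj s₁ t₂ := by
        intro hs2'
        rcases (pathFrom c₁ hs2').cases_tail with h | ⟨c, _, hc⟩
        · exact hss h.symm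
        · exact no_into_s c₂ (hsub c hc.2.2.1) hc.1
      have hcore := core_sameexit c₂ c₁ hs2' hs1 hss.symm c₁.1
      exact m₂ ⟨s₁, hs1, c₁.1, hss, hcore⟩
    · -- s₂ ∈ U₁
      have hsub : ∀ w ∈ bubbleSet Adj s₂ t₂, w ∈ bubbleSet Adj s₁ t₂ :=
        nest c₁ c₂ hs2 (fun _ => rfl)
      have hs1' : s₁ ∉ bubbleSet Adj s₂ t₂ := by
        intro hs1'
        rcases (pathFrom c₂ hs1').cases_tail with h | ⟨c, _, hc⟩
        · exact hss h
        · exact no_into_s c₁ (hsub c hc.2.2.1) hc.1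
      have hcore := core_sameexit c₁ c₂ hs1' hs2 hss h12.symm
      exact m₁ ⟨s₂, hs2, h12.symm, hss.symm, hcore⟩
  · have hS1 : s₁ ∉ bubbleSet Adj s₂ t₂ := by
      intro hs1
      exact m₁ ⟨t₂, ht, htt, h21, core_of c₁ c₂ hs1 ht h21.symm⟩
    have hS2 : s₂ ∈ bubbleSet Adj s₁ t₁ :=
      (ent_or c₁ c₂ hv1 hv2).resolve_left hS1
    have hT1 : t₁ ∉ bubbleSet Adj s₂ t₂ := by
      intro ht1
      exact m₂ ⟨t₁, ht1, fun h => htt h.symm, h12, core_of c₂ c₁ hS2 ht1 h12.symm⟩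
    intro w hw
    refine ⟨nest c₁ c₂ hS2 (fun h => absurd h hT1) w hw, ?_⟩
    simp only [Set.mem_insert_iff, Set.mem_singleton_iff]
    rintro (rfl | rfl)
    · exact hS1 hw
    · exact hT1 hw

end SBaux

/-- If two distinct superbubbles share a vertex, either one's exit is the other's
entrance or one is included in the other's interior. -/
theorem superbubble_share_vertex {V : Type*} (Adj : V → V → Prop) (s₁ t₁ s₂ t₂ : V)
    (h₁ : IsEntranceExit Adj s₁ t₁) (h₂ : IsEntranceExit Adj s₂ t₂)
    (hne : (s₁, t₁) ≠ (s₂, t₂))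
    (hI : (bubbleSet Adj s₁ t₁ ∩ bubbleSet Adj s₂ t₂).Nonempty) :
    t₁ = s₂ ∨ t₂ = s₁ ∨
      bubbleSet Adj s₁ t₁ ⊆ bubbleSet Adj s₂ t₂ \ {s₂, t₂} ∨
      bubbleSet Adj s₂ t₂ ⊆ bubbleSet Adj s₁ t₁ \ {s₁, t₁} := by
  have hne' : ¬(s₁ = s₂ ∧ t₁ = t₂) := by
    intro ⟨a, b⟩
    exact hne (by rw [a, b])
  by_cases e1 : t₁ = s₂
  · exact Or.inl e1
  by_cases e2 : t₂ = s₁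
  · exact Or.inr (Or.inl e2)
  obtain ⟨v, hv1, hv2⟩ := hI
  rcases SBaux.exit_or h₁.1 h₂.1 hv1 hv2 with hT | hT
  · exact Or.inr (Or.inr (Or.inl (SBaux.main_aux h₂ h₁
      (fun ⟨a, b⟩ => hne' ⟨a.symm, b.symm⟩) e2 e1 hv2 hv1 hT)))
  · exact Or.inr (Or.inr (Or.inr (SBaux.main_aux h₁ h₂ hne' e1 e2 hv1 hv2 hT)))
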